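/- arXiv:1311.4478 — 2 statements merged into one kernel-verified Lean document; each statement's English description precedes it below -/
import Mathlib

section
/- Let p be a prime, k a field of characteristic p, γ a root of unity in k of order q, and g(ζ) = γζ + ... a power series in k[[ζ]]. If i₀(g^q) := ord((g^q(ζ) − ζ)/ζ) is finite, then q divides i₀(g^q). -/
open PowerSeries

/-- Formal composition `f ∘ g` of power series (correct when `g` has zero constant term). -/
noncomputable def fcomp {k : Type*} [CommRing k] (f g : PowerSeries k) : PowerSeries k :=
  PowerSeries.mk fun n =>
    ∑ m ∈ Finset.range (n + 1), (PowerSeries.coeff m f) * (PowerSeries.coeff n (g ^ m))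

/-- `m`-th iterate of a power series with zero constant term. -/
noncomputable def fit {k : Type*} [CommRing k] (g : PowerSeries k) : ℕ → PowerSeries k
  | 0 => PowerSeries.X
  | n + 1 => fcomp g (fit g n)

section Aux

variable {k : Type*} [CommRing k]

lemma coeff_fcomp (f g : PowerSeries k) (n : ℕ) :
    PowerSeries.coeff n (fcomp f g) =
      ∑ m ∈ Finset.range (n + 1), (PowerSeries.coeff m f) * (PowerSeries.coeff n (g ^ m)) := by
  simp [fcomp, coeff_mk]

lemma coeff_mul_congr {a a' b b' : PowerSeries k} {n : ℕ}
    (ha : ∀ j ≤ n, PowerSeries.coeff j a = PowerSeries.coeff j a')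
    (hb : ∀ j ≤ n, PowerSeries.coeff j b = PowerSeries.coeff j b') :
    ∀ j ≤ n, PowerSeries.coeff j (a * b) = PowerSeries.coeff j (a' * b') := by
  intro j hj
  rw [PowerSeries.coeff_mul, PowerSeries.coeff_mul]
  refine Finset.sum_congr rfl fun p hp => ?_
  have h1 : p.1 ≤ n := le_trans (Finset.HasAntidiagonal.antidiagonal.fst_le hp) hj
  have h2 : p.2 ≤ n := le_trans (Finset.HasAntidiagonal.antidiagonal.snd_le hp) hj
  rw [ha p.1 h1, hb p.2 h2]

lemma coeff_pow_congr {a b : PowerSeries k} {n : ℕ}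
    (h : ∀ j ≤ n, PowerSeries.coeff j a = PowerSeries.coeff j b) (m : ℕ) :
    ∀ j ≤ n, PowerSeries.coeff j (a ^ m) = PowerSeries.coeff j (b ^ m) := by
  induction m with
  | zero => intro j _; simp
  | succ m ih =>
      intro j hj
      rw [pow_succ, pow_succ]
      exact coeff_mul_congr ih h j hj

lemma coeff_pow_zero_of_lt {g : PowerSeries k} (hg : PowerSeries.constantCoeff g = 0)
    {n m : ℕ} (h : n < m) : PowerSeries.coeff n (g ^ m) = 0 := by
  have : (PowerSeries.X : PowerSeries k) ^ m ∣ g ^ m :=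
    pow_dvd_pow_of_dvd (PowerSeries.X_dvd_iff.mpr hg) m
  exact PowerSeries.X_pow_dvd_iff.mp this n h

lemma poly_coeff_pow_zero_of_lt {Q : Polynomial k} (hQ : Q.coeff 0 = 0)
    {n m : ℕ} (h : n < m) : (Q ^ m).coeff n = 0 := by
  have : (Polynomial.X : Polynomial k) ^ m ∣ Q ^ m :=
    pow_dvd_pow_of_dvd (Polynomial.X_dvd_iff.mpr hQ) m
  exact Polynomial.X_pow_dvd_iff.mp this n h

lemma coeff_comp_poly (P Q : Polynomial k) (hQ : Q.coeff 0 = 0) (n : ℕ) :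
    (P.comp Q).coeff n = ∑ m ∈ Finset.range (n + 1), P.coeff m * (Q ^ m).coeff n := by
  induction P using Polynomial.induction_on' with
  | add p q hp hq =>
      rw [Polynomial.add_comp, Polynomial.coeff_add, hp, hq, ← Finset.sum_add_distrib]
      refine Finset.sum_congr rfl fun m _ => ?_
      rw [Polynomial.coeff_add, add_mul]
  | monomial m a =>
      rw [Polynomial.monomial_comp, Polynomial.coeff_C_mul]
      have : ∀ m' ∈ Finset.range (n + 1),
          (Polynomial.monomial m a).coeff m' * (Q ^ m').coeff n =
          if m' = m then a * (Q ^ m').coeff n else 0 := by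
        intro m' _
        rw [Polynomial.coeff_monomial]
        by_cases h : m' = m
        · subst h; rw [if_pos rfl, if_pos rfl]
        · rw [if_neg (fun hh => h hh.symm), if_neg h, zero_mul]
      rw [Finset.sum_congr rfl this, Finset.sum_ite_eq' (Finset.range (n + 1)) m]
      split_ifs with h
      · rfl
      · rw [Finset.mem_range, not_lt] at h
        rw [poly_coeff_pow_zero_of_lt hQ (by omega), mul_zero]

lemma coeff_fcomp_eq_trunc_comp {g : PowerSeries k} (hg : PowerSeries.constantCoeff g = 0)
    (f : PowerSeries k) {n N : ℕ} (hn : n < N) :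
    PowerSeries.coeff n (fcomp f g) =
      ((PowerSeries.trunc N f).comp (PowerSeries.trunc N g)).coeff n := by
  have hQ0 : (PowerSeries.trunc N g).coeff 0 = 0 := by
    rw [PowerSeries.coeff_trunc, if_pos (by omega : 0 < N),
      PowerSeries.coeff_zero_eq_constantCoeff_apply]
    exact hg
  rw [coeff_comp_poly _ _ hQ0, coeff_fcomp]
  refine Finset.sum_congr rfl fun m hm => ?_
  rw [Finset.mem_range] at hm
  have h1 : (PowerSeries.trunc N f).coeff m = PowerSeries.coeff m f := by
    rw [PowerSeries.coeff_trunc, if_pos (by omega)]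
  have h2 : ((PowerSeries.trunc N g) ^ m).coeff n =
      PowerSeries.coeff n (g ^ m) := by
    have : ((PowerSeries.trunc N g : Polynomial k) ^ m).coeff n =
        PowerSeries.coeff n ((↑(PowerSeries.trunc N g) : PowerSeries k) ^ m) := by
      rw [← Polynomial.coe_pow, Polynomial.coeff_coe]
    rw [this]
    refine coeff_pow_congr (fun j hj => ?_) m n le_rfl
    rw [Polynomial.coeff_coe, PowerSeries.coeff_trunc, if_pos (by omega)]
  rw [h1, h2]

lemma constantCoeff_fcomp (f g : PowerSeries k) :
    PowerSeries.constantCoeff (fcomp f g) = PowerSeries.constantCoeff f := by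
  rw [← PowerSeries.coeff_zero_eq_constantCoeff_apply, coeff_fcomp,
    Finset.sum_range_one, pow_zero, PowerSeries.coeff_one, if_pos rfl, mul_one,
    PowerSeries.coeff_zero_eq_constantCoeff_apply]

lemma coeff_comp_congr_left {P P' Q : Polynomial k} (hQ : Q.coeff 0 = 0) {n : ℕ}
    (h : ∀ j ≤ n, P.coeff j = P'.coeff j) :
    (P.comp Q).coeff n = (P'.comp Q).coeff n := by
  rw [coeff_comp_poly _ _ hQ, coeff_comp_poly _ _ hQ]
  refine Finset.sum_congr rfl fun m hm => ?_
  rw [Finset.mem_range] at hm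
  rw [h m (by omega)]

lemma coeff_comp_congr_right {P Q Q' : Polynomial k} (hQ : Q.coeff 0 = 0)
    (hQ' : Q'.coeff 0 = 0) {n : ℕ}
    (h : ∀ j ≤ n, Q.coeff j = Q'.coeff j) :
    (P.comp Q).coeff n = (P.comp Q').coeff n := by
  rw [coeff_comp_poly _ _ hQ, coeff_comp_poly _ _ hQ']
  refine Finset.sum_congr rfl fun m _ => ?_
  congr 1
  have : PowerSeries.coeff n ((↑Q : PowerSeries k) ^ m) =
      PowerSeries.coeff n ((↑Q' : PowerSeries k) ^ m) := by
    refine coeff_pow_congr (fun j hj => ?_) m n le_rfl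
    rw [Polynomial.coeff_coe, Polynomial.coeff_coe, h j hj]
  rwa [← Polynomial.coe_pow, ← Polynomial.coe_pow, Polynomial.coeff_coe,
    Polynomial.coeff_coe] at this

lemma fcomp_assoc {f a b : PowerSeries k} (ha : PowerSeries.constantCoeff a = 0)
    (hb : PowerSeries.constantCoeff b = 0) :
    fcomp f (fcomp a b) = fcomp (fcomp f a) b := by
  have hab : PowerSeries.constantCoeff (fcomp a b) = 0 := by
    rw [constantCoeff_fcomp]; exact ha
  ext n
  set N := n + 1 with hN
  have hnN : n < N := by omega
  have hTb0 : (PowerSeries.trunc N b).coeff 0 = 0 := by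
    rw [PowerSeries.coeff_trunc, if_pos (by omega)]
    simpa [PowerSeries.coeff_zero_eq_constantCoeff] using hb
  have hTa0 : (PowerSeries.trunc N a).coeff 0 = 0 := by
    rw [PowerSeries.coeff_trunc, if_pos (by omega)]
    simpa [PowerSeries.coeff_zero_eq_constantCoeff] using ha
  have hTab0 : (PowerSeries.trunc N (fcomp a b)).coeff 0 = 0 := by
    rw [PowerSeries.coeff_trunc, if_pos (by omega)]
    simpa [PowerSeries.coeff_zero_eq_constantCoeff] using hab
  have hcomp0 : ((PowerSeries.trunc N a).comp (PowerSeries.trunc N b)).coeff 0 = 0 := by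
    rw [← coeff_fcomp_eq_trunc_comp hb a (by omega : 0 < N)]
    simpa [PowerSeries.coeff_zero_eq_constantCoeff] using hab
  calc PowerSeries.coeff n (fcomp f (fcomp a b))
      = ((PowerSeries.trunc N f).comp (PowerSeries.trunc N (fcomp a b))).coeff n :=
        coeff_fcomp_eq_trunc_comp hab f hnN
    _ = ((PowerSeries.trunc N f).comp
          ((PowerSeries.trunc N a).comp (PowerSeries.trunc N b))).coeff n := by
        refine coeff_comp_congr_right hTab0 hcomp0 fun j hj => ?_
        rw [PowerSeries.coeff_trunc, if_pos (by omega)]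
        exact coeff_fcomp_eq_trunc_comp hb a (by omega)
    _ = (((PowerSeries.trunc N f).comp (PowerSeries.trunc N a)).comp
          (PowerSeries.trunc N b)).coeff n := by
        rw [Polynomial.comp_assoc]
    _ = ((PowerSeries.trunc N (fcomp f a)).comp (PowerSeries.trunc N b)).coeff n := by
        refine coeff_comp_congr_left hTb0 fun j hj => ?_
        rw [PowerSeries.coeff_trunc, if_pos (by omega)]
        exact (coeff_fcomp_eq_trunc_comp ha f (by omega)).symm
    _ = PowerSeries.coeff n (fcomp (fcomp f a) b) :=
        (coeff_fcomp_eq_trunc_comp hb (fcomp f a) hnN).symm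

lemma fcomp_X (f : PowerSeries k) : fcomp f PowerSeries.X = f := by
  ext n
  rw [coeff_fcomp]
  have : ∀ m ∈ Finset.range (n + 1),
      PowerSeries.coeff m f * PowerSeries.coeff n (PowerSeries.X ^ m) =
      if m = n then PowerSeries.coeff m f else 0 := by
    intro m _
    by_cases h : m = n
    · subst h; rw [PowerSeries.coeff_X_pow, if_pos rfl, if_pos rfl, mul_one]
    · rw [PowerSeries.coeff_X_pow, if_neg (fun hh => h hh.symm), mul_zero, if_neg h]
  rw [Finset.sum_congr rfl this, Finset.sum_ite_eq' (Finset.range (n + 1)) n,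
    if_pos (Finset.self_mem_range_succ n)]

lemma X_fcomp {g : PowerSeries k} (hg : PowerSeries.constantCoeff g = 0) :
    fcomp PowerSeries.X g = g := by
  ext n
  rw [coeff_fcomp]
  have : ∀ m ∈ Finset.range (n + 1),
      PowerSeries.coeff m PowerSeries.X * PowerSeries.coeff n (g ^ m) =
      if m = 1 then PowerSeries.coeff n (g ^ m) else 0 := by
    intro m _
    rw [PowerSeries.coeff_X]
    split_ifs <;> simp
  rw [Finset.sum_congr rfl this, Finset.sum_ite_eq' (Finset.range (n + 1)) 1]
  split_ifs with h
  · rw [pow_one]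
  · rw [Finset.mem_range, not_lt] at h
    have hn : n = 0 := by omega
    subst hn
    simpa [PowerSeries.coeff_zero_eq_constantCoeff] using hg.symm

lemma constantCoeff_fit {g : PowerSeries k} (hg : PowerSeries.constantCoeff g = 0) (n : ℕ) :
    PowerSeries.constantCoeff (fit g n) = 0 := by
  cases n with
  | zero => simp [fit]
  | succ n => rw [fit, constantCoeff_fcomp]; exact hg

lemma fcomp_fit_comm {g : PowerSeries k} (hg : PowerSeries.constantCoeff g = 0) (n : ℕ) :
    fcomp g (fit g n) = fcomp (fit g n) g := by
  induction n with
  | zero => rw [fit, fcomp_X, X_fcomp hg]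
  | succ n ih =>
      show fcomp g (fcomp g (fit g n)) = fcomp (fcomp g (fit g n)) g
      rw [ih, fcomp_assoc (constantCoeff_fit hg n) hg, ih]

lemma coeff_lead_pow {f : PowerSeries k} (hf : PowerSeries.constantCoeff f = 0) (m : ℕ) :
    PowerSeries.coeff m (f ^ m) = (PowerSeries.coeff 1 f) ^ m := by
  induction m with
  | zero => simp
  | succ m ih =>
      rw [pow_succ, PowerSeries.coeff_mul]
      rw [Finset.sum_eq_single (m, 1)]
      · rw [ih, pow_succ]
      · intro p hp hne
        rw [Finset.HasAntidiagonal.mem_antidiagonal] at hp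
        rcases lt_trichotomy p.1 m with h | h | h
        · rw [coeff_pow_zero_of_lt hf h, zero_mul]
        · exfalso; apply hne
          have : p.2 = 1 := by omega
          exact Prod.ext h this
        · have : p.2 = 0 := by omega
          rw [this, PowerSeries.coeff_zero_eq_constantCoeff_apply, hf, mul_zero]
      · intro h
        exfalso; apply h
        rw [Finset.HasAntidiagonal.mem_antidiagonal]

end Aux

/-- Let `k` be a field of characteristic `p`, `γ ∈ k` a root of unity of order `q`, and
`g(ζ) = γζ + ⋯ ∈ k[[ζ]]`.  If `i₀(g^q) = ord((g^q(ζ) - ζ)/ζ)` is finite — i.e. the order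
of `g^q(ζ) - ζ` equals `i + 1` for some natural number `i` — then `q ∣ i`. -/
theorem stmt7 {k : Type*} [Field k] (p : ℕ) (hp : p.Prime) [CharP k p]
    (γ : k) (q : ℕ) (hq0 : 0 < q) (hγq : γ ^ q = 1)
    (hqmin : ∀ j, 0 < j → j < q → γ ^ j ≠ 1)
    (g : PowerSeries k) (hg0 : PowerSeries.constantCoeff g = 0)
    (hg1 : PowerSeries.coeff 1 g = γ)
    (i : ℕ) (hi : PowerSeries.order (fit g q - PowerSeries.X) = ((i + 1 : ℕ) : ℕ∞)) :
    q ∣ i := by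
  rcases Nat.eq_zero_or_pos i with hi0 | hi1
  · subst hi0; exact dvd_zero q
  set G := fit g q with hG
  have horder := PowerSeries.order_eq_nat.mp hi
  have hc : PowerSeries.coeff (i + 1) (G - PowerSeries.X) ≠ 0 := horder.1
  have hlow : ∀ j < i + 1, PowerSeries.coeff j (G - PowerSeries.X) = 0 := horder.2
  set c := PowerSeries.coeff (i + 1) (G - PowerSeries.X) with hcdef
  set a := PowerSeries.coeff (i + 1) g with hadef
  -- coefficients of G
  have hG0 : PowerSeries.constantCoeff G = 0 := constantCoeff_fit hg0 q
  have hGcoeff : ∀ j ≤ i + 1, PowerSeries.coeff j G =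
      PowerSeries.coeff j (G - PowerSeries.X) + PowerSeries.coeff j PowerSeries.X := by
    intro j _; rw [map_sub]; ring
  have hG1 : PowerSeries.coeff 1 G = 1 := by
    rw [hGcoeff 1 (by omega), hlow 1 (by omega), PowerSeries.coeff_X, if_pos rfl, zero_add]
  have hGmid : ∀ m, 2 ≤ m → m ≤ i → PowerSeries.coeff m G = 0 := by
    intro m h2 hle
    rw [hGcoeff m (by omega), hlow m (by omega), PowerSeries.coeff_X, if_neg (by omega), add_zero]
  have hGtop : PowerSeries.coeff (i + 1) G = c := by
    rw [hGcoeff (i + 1) le_rfl, PowerSeries.coeff_X, if_neg (by omega), add_zero]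
  -- X^(i+1) ∣ G - X
  have hXE : (PowerSeries.X : PowerSeries k) ^ (i + 1) ∣ G - PowerSeries.X :=
    PowerSeries.X_pow_dvd_iff.mpr hlow
  have hXG : (PowerSeries.X : PowerSeries k) ∣ G := PowerSeries.X_dvd_iff.mpr hG0
  -- coeff (i+1) (G^m) for 2 ≤ m ≤ i+1
  have hGpow : ∀ m, 2 ≤ m → m ≤ i + 1 →
      PowerSeries.coeff (i + 1) (G ^ m) = if m = i + 1 then 1 else 0 := by
    intro m h2 hle
    have hgeom := geom_sum₂_mul G (PowerSeries.X : PowerSeries k) m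
    have hdvd : (PowerSeries.X : PowerSeries k) ^ (m + i) ∣
        G ^ m - PowerSeries.X ^ m := by
      rw [← hgeom]
      have h1 : (PowerSeries.X : PowerSeries k) ^ (m - 1) ∣
          ∑ j ∈ Finset.range m, G ^ j * PowerSeries.X ^ (m - 1 - j) := by
        refine Finset.dvd_sum fun j hj => ?_
        rw [Finset.mem_range] at hj
        have : (PowerSeries.X : PowerSeries k) ^ (m - 1) =
            PowerSeries.X ^ j * PowerSeries.X ^ (m - 1 - j) := by
          rw [← pow_add]; congr 1; omega
        rw [this]
        exact mul_dvd_mul (pow_dvd_pow_of_dvd hXG j) dvd_rfl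
      have : (PowerSeries.X : PowerSeries k) ^ (m + i) =
          PowerSeries.X ^ (m - 1) * PowerSeries.X ^ (i + 1) := by
        rw [← pow_add]; congr 1; omega
      rw [this]
      exact mul_dvd_mul h1 hXE
    have hzero : PowerSeries.coeff (i + 1) (G ^ m - PowerSeries.X ^ m) = 0 :=
      PowerSeries.X_pow_dvd_iff.mp hdvd (i + 1) (by omega)
    have : PowerSeries.coeff (i + 1) (G ^ m) =
        PowerSeries.coeff (i + 1) (PowerSeries.X ^ m) := by
      have := congrArg (fun x => x + PowerSeries.coeff (i + 1) (PowerSeries.X ^ m)) hzero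
      simpa [map_sub, sub_add_cancel] using this
    by_cases h : m = i + 1
    · subst h; rw [this, PowerSeries.coeff_X_pow]
    · rw [this, PowerSeries.coeff_X_pow, if_neg (fun hh => h hh.symm), if_neg h]
  -- the commutation relation at coefficient i+1
  have key := congrArg (PowerSeries.coeff (i + 1)) (fcomp_fit_comm hg0 q)
  rw [coeff_fcomp, coeff_fcomp] at key
  -- left side
  have hL : ∑ m ∈ Finset.range (i + 1 + 1),
      PowerSeries.coeff m g * PowerSeries.coeff (i + 1) ((fit g q) ^ m) =
      γ * c + a := by
    have hpt : ∀ m ∈ Finset.range (i + 1 + 1),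
        PowerSeries.coeff m g * PowerSeries.coeff (i + 1) (G ^ m) =
        (if m = 1 then γ * c else 0) + (if m = i + 1 then a else 0) := by
      intro m hm
      rw [Finset.mem_range] at hm
      by_cases h1 : m = 1
      · subst h1
        rw [if_pos rfl, if_neg (by omega), pow_one, hg1, hGtop, add_zero]
      by_cases h2 : m = i + 1
      · subst h2
        rw [if_neg h1, if_pos rfl, hGpow (i + 1) (by omega) le_rfl, if_pos rfl,
          mul_one, zero_add]
      rw [if_neg h1, if_neg h2, add_zero]
      rcases Nat.eq_zero_or_pos m with h0 | h0
      · subst h0; simp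
      · rw [hGpow m (by omega) (by omega), if_neg h2, mul_zero]
    rw [← hG, Finset.sum_congr rfl hpt, Finset.sum_add_distrib,
      Finset.sum_ite_eq' (Finset.range (i + 1 + 1)) 1,
      Finset.sum_ite_eq' (Finset.range (i + 1 + 1)) (i + 1),
      if_pos (by rw [Finset.mem_range]; omega),
      if_pos (by rw [Finset.mem_range]; omega)]
  -- right side
  have hR : ∑ m ∈ Finset.range (i + 1 + 1),
      PowerSeries.coeff m (fit g q) * PowerSeries.coeff (i + 1) (g ^ m) =
      a + c * γ ^ (i + 1) := by
    have hpt : ∀ m ∈ Finset.range (i + 1 + 1),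
        PowerSeries.coeff m G * PowerSeries.coeff (i + 1) (g ^ m) =
        (if m = 1 then a else 0) + (if m = i + 1 then c * γ ^ (i + 1) else 0) := by
      intro m hm
      rw [Finset.mem_range] at hm
      by_cases h1 : m = 1
      · subst h1
        rw [if_pos rfl, if_neg (by omega), hG1, pow_one, one_mul, add_zero]
      by_cases h2 : m = i + 1
      · subst h2
        rw [if_neg h1, if_pos rfl, hGtop, coeff_lead_pow hg0 (i + 1), hg1, zero_add]
      rw [if_neg h1, if_neg h2, add_zero]
      rcases Nat.eq_zero_or_pos m with h0 | h0
      · subst h0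
        rw [pow_zero]
        simp [hG0, PowerSeries.coeff_zero_eq_constantCoeff]
      · rw [hGmid m (by omega) (by omega), zero_mul]
    rw [← hG, Finset.sum_congr rfl hpt, Finset.sum_add_distrib,
      Finset.sum_ite_eq' (Finset.range (i + 1 + 1)) 1,
      Finset.sum_ite_eq' (Finset.range (i + 1 + 1)) (i + 1),
      if_pos (by rw [Finset.mem_range]; omega),
      if_pos (by rw [Finset.mem_range]; omega)]
  rw [hL, hR] at key
  -- deduce γ^i = 1
  have hγne : γ ≠ 0 := by
    intro h
    rw [h, zero_pow (by omega)] at hγq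
    exact one_ne_zero hγq.symm
  have hγi : γ ^ i = 1 := by
    have h2 : c * (γ ^ (i + 1) - γ) = 0 := by linear_combination -key
    have h3 : γ ^ (i + 1) = γ := by
      rcases mul_eq_zero.mp h2 with h | h
      · exact absurd h hc
      · exact sub_eq_zero.mp h
    have h4 : γ * γ ^ i = γ * 1 := by
      rw [mul_one, ← pow_succ']
      exact h3
    exact mul_left_cancel₀ hγne h4
  -- conclude q ∣ i
  have hmod : γ ^ (i % q) = 1 := by
    conv at hγi => rw [← Nat.div_add_mod i q]
    rw [pow_add, pow_mul, hγq, one_pow, one_mul] at hγi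
    exact hγi
  rcases Nat.eq_zero_or_pos (i % q) with h | h
  · exact Nat.dvd_of_mod_eq_zero h
  · exact absurd hmod (hqmin (i % q) h (Nat.mod_lt i hq0))
end

section
/- Let k be a field of characteristic 2 and a₁, a₂ ∈ k with g(ζ) ≡ ζ(1 + a₁ζ + a₂ζ²) mod ζ⁴ in k[[ζ]]. Then g is minimally ramified (meaning i_n(g) = 2^{n+1} − 1 for all n ≥ 0, where i_n(g) = ord((g^{2^n}(ζ) − ζ)/ζ)) if and only if a₁ ≠ 0, a₂ ≠ 0, and a₂ ≠ a₁². -/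
open PowerSeries

namespace Stmt16Aux

variable {k : Type*} [Field k]

lemma coeff_fcomp (f g : PowerSeries k) (n : ℕ) :
    coeff n (fcomp f g) = ∑ m ∈ Finset.range (n + 1), coeff m f * coeff n (g ^ m) := by
  simp [fcomp]

lemma coeff_pow_eq_zero {g : PowerSeries k} (hg : constantCoeff g = 0) {n m : ℕ}
    (h : n < m) : coeff n (g ^ m) = 0 := by
  have hX : (X : PowerSeries k) ^ m ∣ g ^ m :=
    pow_dvd_pow_of_dvd (X_dvd_iff.2 hg) m
  exact X_pow_dvd_iff.1 hX n h

lemma fcomp_X_right (f : PowerSeries k) : fcomp f X = f := by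
  ext n
  rw [coeff_fcomp]
  simp [coeff_X_pow, Finset.sum_ite_eq]

lemma fcomp_X_left {h : PowerSeries k} (hh : constantCoeff h = 0) :
    fcomp X h = h := by
  ext n
  rw [coeff_fcomp]
  simp only [coeff_X, ite_mul, one_mul, zero_mul]
  rw [Finset.sum_ite_eq' (Finset.range (n + 1)) 1 (fun m => coeff n (h ^ m))]
  cases n with
  | zero => simp [coeff_zero_eq_constantCoeff, hh]
  | succ n => simp

lemma fcomp_C_left (c : k) (h : PowerSeries k) : fcomp (C c) h = C c := by
  ext n
  rw [coeff_fcomp]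
  simp only [coeff_C, ite_mul, zero_mul]
  rw [Finset.sum_ite_eq' (Finset.range (n + 1)) 0 (fun m => c * coeff n (h ^ m))]
  simp only [Finset.mem_range, Nat.succ_pos, if_pos, pow_zero, coeff_one]
  cases n with
  | zero => simp
  | succ n => simp

lemma fcomp_add_left (f₁ f₂ h : PowerSeries k) :
    fcomp (f₁ + f₂) h = fcomp f₁ h + fcomp f₂ h := by
  ext n
  simp [coeff_fcomp, add_mul, Finset.sum_add_distrib]

lemma X_pow_dvd_fcomp_sub {h : PowerSeries k} (hh : constantCoeff h = 0)
    (f : PowerSeries k) (N : ℕ) :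
    (X : PowerSeries k) ^ N ∣ fcomp f h - ∑ i ∈ Finset.range N, C (coeff i f) * h ^ i := by
  rw [X_pow_dvd_iff]
  intro n hn
  rw [map_sub, coeff_fcomp, map_sum]
  simp only [coeff_C_mul]
  rw [Finset.sum_subset (Finset.range_subset_range.2 (by omega : n + 1 ≤ N))
    (fun x hx hnx => by
      have hlt : n < x := by
        simp only [Finset.mem_range] at hx hnx; omega
      rw [coeff_pow_eq_zero hh hlt, mul_zero]), sub_self]

lemma sum_eq_eval₂ (h : PowerSeries k) (f : PowerSeries k) (N : ℕ) (hN : 0 < N) :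
    ∑ i ∈ Finset.range N, C (coeff i f) * h ^ i
      = Polynomial.eval₂ C h (trunc N f) := by
  have hdeg : (trunc N f).natDegree < N := by
    rcases eq_or_ne (trunc N f) 0 with h0 | h0
    · simp [h0, hN]
    · exact (Polynomial.natDegree_lt_iff_degree_lt h0).2 (by simpa using degree_trunc_lt f N)
  rw [Polynomial.eval₂_eq_sum_range' C hdeg h]
  refine Finset.sum_congr rfl fun i hi => ?_
  rw [coeff_trunc, if_pos (Finset.mem_range.1 hi)]

lemma fcomp_mul_left {h : PowerSeries k} (hh : constantCoeff h = 0)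
    (f₁ f₂ : PowerSeries k) :
    fcomp (f₁ * f₂) h = fcomp f₁ h * fcomp f₂ h := by
  ext n
  have hN : 0 < n + 1 := Nat.succ_pos n
  set N := n + 1 with hNdef
  have w12 := X_pow_dvd_fcomp_sub hh (f₁ * f₂) N
  have w1 := X_pow_dvd_fcomp_sub hh f₁ N
  have w2 := X_pow_dvd_fcomp_sub hh f₂ N
  set S12 := ∑ i ∈ Finset.range N, C (coeff i (f₁ * f₂)) * h ^ i with hS12
  set S1 := ∑ i ∈ Finset.range N, C (coeff i f₁) * h ^ i with hS1
  set S2 := ∑ i ∈ Finset.range N, C (coeff i f₂) * h ^ i with hS2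
  have key : (X : PowerSeries k) ^ N ∣ S12 - S1 * S2 := by
    rw [hS12, hS1, hS2, sum_eq_eval₂ h (f₁ * f₂) N hN, sum_eq_eval₂ h f₁ N hN,
      sum_eq_eval₂ h f₂ N hN, ← Polynomial.eval₂_mul, ← Polynomial.eval₂_sub]
    set p := trunc N (f₁ * f₂) - trunc N f₁ * trunc N f₂ with hp
    have hpdvd : (Polynomial.X : Polynomial k) ^ N ∣ p := by
      rw [Polynomial.X_pow_dvd_iff]
      intro d hd
      rw [hp, Polynomial.coeff_sub, coeff_trunc, if_pos hd,
        coeff_mul_eq_coeff_trunc_mul_trunc f₁ f₂ hd, ← Polynomial.coe_mul,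
        Polynomial.coeff_coe, sub_self]
    obtain ⟨p', hp'⟩ := hpdvd
    rw [hp', Polynomial.eval₂_mul, Polynomial.eval₂_pow, Polynomial.eval₂_X]
    exact Dvd.dvd.mul_right (pow_dvd_pow_of_dvd (X_dvd_iff.2 hh) N) _
  have main : (X : PowerSeries k) ^ N ∣ fcomp (f₁ * f₂) h - fcomp f₁ h * fcomp f₂ h := by
    have : fcomp (f₁ * f₂) h - fcomp f₁ h * fcomp f₂ h
        = (fcomp (f₁ * f₂) h - S12) + (S12 - S1 * S2)
          - ((fcomp f₁ h - S1) * fcomp f₂ h + S1 * (fcomp f₂ h - S2)) := by ring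
    rw [this]
    exact dvd_sub (dvd_add w12 key) (dvd_add (w1.mul_right _) (w2.mul_left _))
  have := X_pow_dvd_iff.1 main n (by omega)
  rw [map_sub] at this
  exact sub_eq_zero.1 this

lemma fcomp_pow_left {h : PowerSeries k} (hh : constantCoeff h = 0)
    (f : PowerSeries k) (m : ℕ) :
    fcomp (f ^ m) h = (fcomp f h) ^ m := by
  induction m with
  | zero => simpa using fcomp_C_left 1 h
  | succ m ih => rw [pow_succ, fcomp_mul_left hh, ih, pow_succ]

lemma fcomp_assoc (f g h : PowerSeries k) (hg : constantCoeff g = 0)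
    (hh : constantCoeff h = 0) :
    fcomp (fcomp f g) h = fcomp f (fcomp g h) := by
  ext n
  rw [coeff_fcomp, coeff_fcomp]
  have step1 : ∀ m ∈ Finset.range (n + 1), coeff m (fcomp f g) * coeff n (h ^ m)
      = ∑ j ∈ Finset.range (n + 1), coeff j f * coeff m (g ^ j) * coeff n (h ^ m) := by
    intro m hm
    rw [coeff_fcomp, Finset.sum_mul]
    refine Finset.sum_subset (Finset.range_subset_range.2 ?_) ?_
    · simp only [Finset.mem_range] at hm; omega
    · intro j hj hj'
      have hlt : m < j := by simp only [Finset.mem_range] at hj hj'; omega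
      rw [coeff_pow_eq_zero hg hlt, mul_zero, zero_mul]
  rw [Finset.sum_congr rfl step1, Finset.sum_comm]
  refine Finset.sum_congr rfl fun j hj => ?_
  rw [← fcomp_pow_left hh g j, coeff_fcomp, Finset.mul_sum]
  exact Finset.sum_congr rfl fun m _ => mul_assoc _ _ _

lemma constantCoeff_fcomp (f g : PowerSeries k) :
    constantCoeff (fcomp f g) = constantCoeff f := by
  have := coeff_fcomp f g 0
  simpa [coeff_zero_eq_constantCoeff] using this

lemma constantCoeff_fit {g : PowerSeries k} (hg : constantCoeff g = 0) (n : ℕ) :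
    constantCoeff (fit g n) = 0 := by
  induction n with
  | zero => simp [fit]
  | succ n ih => rw [fit, constantCoeff_fcomp]; exact hg

lemma fit_add {g : PowerSeries k} (hg : constantCoeff g = 0) (m n : ℕ) :
    fit g (m + n) = fcomp (fit g m) (fit g n) := by
  induction m with
  | zero =>
      rw [Nat.zero_add]
      exact (fcomp_X_left (constantCoeff_fit hg n)).symm
  | succ m ih =>
      have e : m + 1 + n = (m + n) + 1 := by omega
      rw [e]
      show fcomp g (fit g (m + n)) = _
      rw [ih, ← fcomp_assoc g (fit g m) (fit g n) (constantCoeff_fit hg m)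
        (constantCoeff_fit hg n)]
      rfl

lemma fcomp_congr {g g' : PowerSeries k} (f : PowerSeries k) (c : ℕ)
    (hgg : (X : PowerSeries k) ^ c ∣ g - g') :
    (X : PowerSeries k) ^ c ∣ fcomp f g - fcomp f g' := by
  rw [X_pow_dvd_iff]
  intro n hn
  rw [map_sub, coeff_fcomp, coeff_fcomp, ← Finset.sum_sub_distrib]
  refine Finset.sum_eq_zero fun m hm => ?_
  rw [← mul_sub, ← map_sub]
  have hdvd : (X : PowerSeries k) ^ c ∣ g ^ m - g' ^ m :=
    dvd_trans hgg (sub_dvd_pow_sub_pow g g' m)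
  rw [X_pow_dvd_iff.1 hdvd n hn, mul_zero]

lemma fcomp_expand {h : PowerSeries k} (hh : constantCoeff h = 0)
    (u v : k) (e₁ e₂ e₃ : ℕ) (w : PowerSeries k) :
    fcomp (X + C u * X ^ e₁ + C v * X ^ e₂ + X ^ e₃ * w) h
      = h + C u * h ^ e₁ + C v * h ^ e₂ + h ^ e₃ * fcomp w h := by
  rw [fcomp_add_left, fcomp_add_left, fcomp_add_left,
    fcomp_mul_left hh, fcomp_mul_left hh, fcomp_mul_left hh,
    fcomp_C_left, fcomp_C_left, fcomp_pow_left hh, fcomp_pow_left hh, fcomp_pow_left hh,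
    fcomp_X_left hh]

section Char2

variable [CharP k 2]

instance : CharP (PowerSeries k) 2 := charP_of_injective_ringHom C_injective 2

lemma two_eq_zero' : (2 : PowerSeries k) = 0 := by
  have := CharP.cast_eq_zero (PowerSeries k) 2
  simpa using this

/-- The inductive step: squaring an iterate in char 2. -/
lemma step (m : ℕ) (hm : 2 ≤ m) (u v : k) (h r : PowerSeries k)
    (hh : h = X + C u * X ^ (2 ^ m) + C v * X ^ (2 ^ m + 1) + X ^ (2 ^ m + 2) * r) :
    ∃ s, fcomp h h = X + C u * C v * X ^ (2 ^ (m + 1))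
      + C v * C v * X ^ (2 ^ (m + 1) + 1) + X ^ (2 ^ (m + 1) + 2) * s := by
  have h2 : (2 : PowerSeries k) = 0 := two_eq_zero'
  set q := 2 ^ m with hq
  have hq4 : 4 ≤ q := by
    rw [hq]
    calc (4:ℕ) = 2 ^ 2 := rfl
    _ ≤ 2 ^ m := Nat.pow_le_pow_right (by norm_num) hm
  have hch : constantCoeff h = 0 := by
    rw [hh]
    simp [zero_pow (show q ≠ 0 by omega), zero_pow (show q + 1 ≠ 0 by omega),
      zero_pow (show q + 2 ≠ 0 by omega)]
  have hXT : h = X + X ^ q * (C u + C v * X + X ^ 2 * r) := by rw [hh]; ring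
  have hApre : h ^ q - X ^ q = X ^ (q * q) * (C u + C v * X + X ^ 2 * r) ^ q := by
    rw [hXT, hq, add_pow_char_pow, mul_pow, ← pow_mul]
    ring
  obtain ⟨A, hA⟩ : ∃ A, h ^ q = X ^ q + X ^ (2 * q + 2) * A := by
    obtain ⟨c, hc⟩ : (X : PowerSeries k) ^ (2 * q + 2) ∣ X ^ (q * q) :=
      pow_dvd_pow _ (by nlinarith)
    exact ⟨c * (C u + C v * X + X ^ 2 * r) ^ q,
      by linear_combination hApre + ((C u + C v * X + X ^ 2 * r) ^ q) * hc⟩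
  have hsq : h ^ 2 = X ^ 2 + X ^ (2 * q) * ((C u + C v * X + X ^ 2 * r)
      * (C u + C v * X + X ^ 2 * r)) := by
    rw [hXT]
    linear_combination (X * (X ^ q * (C u + C v * X + X ^ 2 * r))) * h2
  have hB : h ^ (q + 1) = X ^ (q + 1) + C u * X ^ (2 * q) + C v * X ^ (2 * q + 1)
      + X ^ (2 * q + 2) * (r + X * A + X ^ q * ((C u + C v * X + X ^ 2 * r) * A)) := by
    rw [pow_succ, hA, hXT]; ring
  obtain ⟨C1, hC1⟩ : ∃ C1, h ^ (q + 2) = X ^ (q + 2) + X ^ (2 * q + 2) * C1 := by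
    obtain ⟨e, he⟩ := Nat.le.dest (show 2 * q + 2 ≤ 3 * q by omega)
    have hX3 : (X : PowerSeries k) ^ q * X ^ (2 * q) = X ^ (2 * q + 2) * X ^ e := by
      rw [← pow_add, ← pow_add]
      congr 1
      omega
    refine ⟨X ^ e * ((C u + C v * X + X ^ 2 * r) * (C u + C v * X + X ^ 2 * r))
      + X ^ 2 * A + X ^ (2 * q) * ((C u + C v * X + X ^ 2 * r)
        * (C u + C v * X + X ^ 2 * r) * A), ?_⟩
    have hmul : h ^ (q + 2) = h ^ q * h ^ 2 := by ring
    rw [hmul, hA, hsq]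
    linear_combination ((C u + C v * X + X ^ 2 * r)
      * (C u + C v * X + X ^ 2 * r)) * hX3
  obtain ⟨D, hD⟩ : ∃ D, fcomp r h = r + X ^ q * D := by
    have hXdvd : (X : PowerSeries k) ^ q ∣ h - X :=
      ⟨C u + C v * X + X ^ 2 * r, by linear_combination hXT⟩
    obtain ⟨D, hD⟩ := fcomp_congr r q hXdvd
    rw [fcomp_X_right] at hD
    exact ⟨D, by linear_combination hD⟩
  have E1 : fcomp h h = h + C u * h ^ q + C v * h ^ (q + 1)
      + h ^ (q + 2) * fcomp r h := by
    nth_rewrite 1 [hh]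
    exact fcomp_expand hch u v q (q + 1) (q + 2) r
  refine ⟨C u * A + C v * (r + X * A + X ^ q * ((C u + C v * X + X ^ 2 * r) * A))
    + D + C1 * (r + X ^ q * D), ?_⟩
  rw [show (2:ℕ) ^ (m + 1) = 2 * q from by rw [hq]; ring]
  rw [E1, hD, hA, hB, hC1, hh]
  linear_combination (C u * X ^ q + C v * X ^ (q + 1) + X ^ (q + 2) * r) * h2

/-- Base case: the square of `g` in char 2. -/
lemma base (a b : k) (g r : PowerSeries k)
    (hgeq : g = X + C a * X ^ 2 + C b * X ^ 3 + X ^ 4 * r) :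
    ∃ s, fit g 2 = X + C a * (C a * C a + C b) * X ^ 4
      + C b * (C a * C a + C b) * X ^ 5 + X ^ 6 * s := by
  have h2 : (2 : PowerSeries k) = 0 := two_eq_zero'
  have hcg : constantCoeff g = 0 := by rw [hgeq]; simp
  obtain ⟨A2, hA2⟩ : ∃ A2, g ^ 2 = X ^ 2 + C a * C a * X ^ 4 + X ^ 6 * A2 :=
    ⟨C b * C b + X ^ 2 * (r * r), by
      rw [hgeq]
      linear_combination (C a * X ^ 3 + C b * X ^ 4 + X ^ 5 * r
        + C a * C b * X ^ 5 + C a * X ^ 6 * r + C b * X ^ 7 * r) * h2⟩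
  obtain ⟨B, hB⟩ : ∃ B, g ^ 3 = X ^ 3 + C a * X ^ 4
      + (C b + C a * C a) * X ^ 5 + X ^ 6 * B :=
    ⟨r + C a * C a * C a + C a * C a * C b * X + C a * C a * X ^ 2 * r
      + X * A2 + C a * X ^ 2 * A2 + C b * X ^ 3 * A2 + X ^ 4 * (A2 * r), by
      rw [pow_succ, hA2, hgeq]; ring⟩
  obtain ⟨G, hG⟩ : ∃ G, g ^ 4 = X ^ 4 + X ^ 6 * G :=
    ⟨C a * C a * (C a * C a) * X ^ 2 + X ^ 6 * (A2 * A2), by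
      rw [show g ^ 4 = (g ^ 2) ^ 2 by ring, hA2]
      linear_combination (C a * C a * X ^ 6 + X ^ 8 * A2
        + C a * C a * X ^ 10 * A2) * h2⟩
  obtain ⟨D, hD⟩ : ∃ D, fcomp r g = r + X ^ 2 * D := by
    have hXdvd : (X : PowerSeries k) ^ 2 ∣ g - X :=
      ⟨C a + C b * X + X ^ 2 * r, by linear_combination hgeq⟩
    obtain ⟨D, hD⟩ := fcomp_congr r 2 hXdvd
    rw [fcomp_X_right] at hD
    exact ⟨D, by linear_combination hD⟩
  have h1 : fit g 2 = fcomp g g := by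
    show fcomp g (fcomp g X) = _
    rw [fcomp_X_right]
  refine ⟨C a * A2 + C b * B + D + G * (r + X ^ 2 * D), ?_⟩
  have E1 : fcomp g g = g + C a * g ^ 2 + C b * g ^ 3 + g ^ 4 * fcomp r g := by
    nth_rewrite 1 [hgeq]
    exact fcomp_expand hcg a b 2 3 4 r
  rw [h1, E1, hD, hA2, hB, hG, hgeq]
  linear_combination (C a * X ^ 2 + C b * X ^ 3 + X ^ 4 * r) * h2

end Char2

/-- The sequence `v_n` of next-to-leading coefficients of the iterates. -/
def V (a b : k) : ℕ → k
  | 0 => b * (a * a + b)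
  | n + 1 => V a b n * V a b n

/-- The sequence `u_n` of leading coefficients of the iterates. -/
def U (a b : k) : ℕ → k
  | 0 => a * (a * a + b)
  | n + 1 => U a b n * V a b n

section Char2
variable [CharP k 2]

lemma structure_lemma (a b : k) (g r : PowerSeries k)
    (hgeq : g = X + C a * X ^ 2 + C b * X ^ 3 + X ^ 4 * r) (n : ℕ) :
    ∃ s, fit g (2 ^ (n + 1)) = X + C (U a b n) * X ^ (2 ^ (n + 2))
      + C (V a b n) * X ^ (2 ^ (n + 2) + 1) + X ^ (2 ^ (n + 2) + 2) * s := by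
  have hcg : constantCoeff g = 0 := by rw [hgeq]; simp
  induction n with
  | zero =>
      obtain ⟨s, hs⟩ := base a b g r hgeq
      refine ⟨s, ?_⟩
      rw [show (2:ℕ) ^ (0 + 1) = 2 by norm_num, show (2:ℕ) ^ (0 + 2) = 4 by norm_num]
      simp only [U, V, map_mul, map_add]
      norm_num
      convert hs using 2
  | succ n ih =>
      obtain ⟨s, hs⟩ := ih
      obtain ⟨t, ht⟩ := step (n + 2) (by omega) (U a b n) (V a b n) _ s hs
      refine ⟨t, ?_⟩
      have hsplit : (2:ℕ) ^ (n + 1 + 1) = 2 ^ (n + 1) + 2 ^ (n + 1) := by ring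
      rw [hsplit, fit_add hcg, ht]
      simp only [U, V, map_mul]

end Char2

lemma order_shape_iff {f : PowerSeries k} {w : k} {q : ℕ} {tail : PowerSeries k}
    (hf : f = C w * X ^ q + X ^ (q + 1) * tail) :
    order f = (q : ℕ∞) ↔ w ≠ 0 := by
  have hcoeff : coeff q f = w := by
    rw [hf, map_add, coeff_C_mul, coeff_X_pow, if_pos rfl, mul_one,
      X_pow_dvd_iff.1 (dvd_mul_right _ tail) q (by omega), add_zero]
  constructor
  · intro hord h0
    exact (order_eq_nat.1 hord).1 (by rw [hcoeff, h0])
  · intro hw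
    rw [order_eq_nat]
    refine ⟨by rw [hcoeff]; exact hw, fun i hi => ?_⟩
    rw [hf, map_add, coeff_C_mul, coeff_X_pow, if_neg (by omega), mul_zero,
      X_pow_dvd_iff.1 (dvd_mul_right _ tail) i (by omega), add_zero]

end Stmt16Aux

open Stmt16Aux in
/-- Let `k` have characteristic `2` and `g(ζ) ≡ ζ(1 + a₁ζ + a₂ζ²) mod ζ⁴`.  Then `g` is
minimally ramified — `i_n(g) = ord((g^{2^n}(ζ) - ζ)/ζ) = 2^{n+1} - 1` for all `n`, i.e.
`ord(g^{2^n}(ζ) - ζ) = 2^{n+1}` — if and only if `a₁ ≠ 0`, `a₂ ≠ 0`, and `a₂ ≠ a₁²`. -/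
theorem stmt16 {k : Type*} [Field k] [CharP k 2]
    (a₁ a₂ : k) (g : PowerSeries k)
    (hg : (PowerSeries.X : PowerSeries k) ^ 4 ∣
      g - PowerSeries.X * (1 + PowerSeries.C a₁ * PowerSeries.X
        + PowerSeries.C a₂ * PowerSeries.X ^ 2)) :
    (∀ n : ℕ, PowerSeries.order (fit g (2 ^ n) - PowerSeries.X) = ((2 ^ (n + 1) : ℕ) : ℕ∞))
      ↔ (a₁ ≠ 0 ∧ a₂ ≠ 0 ∧ a₂ ≠ a₁ ^ 2) := by
  obtain ⟨r, hr⟩ := hg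
  have hgeq : g = X + C a₁ * X ^ 2 + C a₂ * X ^ 3 + X ^ 4 * r := by
    linear_combination hr
  have hk2 : (2 : k) = 0 := by
    have := CharP.cast_eq_zero k 2
    simpa using this
  have hshape0 : g - X = C a₁ * X ^ 2 + X ^ (2 + 1) * (C a₂ + X * r) := by
    rw [hgeq]; ring
  have hfg : fit g (2 ^ 0) = g := by
    rw [pow_zero]
    show fcomp g X = g
    exact fcomp_X_right g
  have ois : ∀ n : ℕ, (order (fit g (2 ^ (n + 1)) - X) = ((2 ^ (n + 2) : ℕ) : ℕ∞)
      ↔ U a₁ a₂ n ≠ 0) := by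
    intro n
    obtain ⟨s, hs⟩ := structure_lemma a₁ a₂ g r hgeq n
    have hshape : fit g (2 ^ (n + 1)) - X = C (U a₁ a₂ n) * X ^ (2 ^ (n + 2))
        + X ^ (2 ^ (n + 2) + 1) * (C (V a₁ a₂ n) + X * s) := by
      rw [hs]; ring
    exact order_shape_iff hshape
  constructor
  · intro H
    have ha : a₁ ≠ 0 := by
      have H0 := H 0
      rw [hfg] at H0
      exact (order_shape_iff hshape0).mp H0
    have w1 : U a₁ a₂ 0 ≠ 0 := (ois 0).mp (H 1)
    have w2 : U a₁ a₂ 1 ≠ 0 := (ois 1).mp (H 2)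
    have hfac : a₁ * a₁ + a₂ ≠ 0 := by
      intro h
      apply w1
      show a₁ * (a₁ * a₁ + a₂) = 0
      rw [h, mul_zero]
    refine ⟨ha, ?_, ?_⟩
    · intro h
      apply w2
      show a₁ * (a₁ * a₁ + a₂) * (a₂ * (a₁ * a₁ + a₂)) = 0
      rw [h]; ring
    · intro h
      apply hfac
      linear_combination h + a₁ ^ 2 * hk2
  · rintro ⟨ha, hb, hab⟩
    have hfac : a₁ * a₁ + a₂ ≠ 0 := by
      intro h
      exact hab (by linear_combination h - a₁ * a₁ * hk2)
    have hUV : ∀ n, U a₁ a₂ n ≠ 0 ∧ V a₁ a₂ n ≠ 0 := by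
      intro n
      induction n with
      | zero => exact ⟨mul_ne_zero ha hfac, mul_ne_zero hb hfac⟩
      | succ n ih => exact ⟨mul_ne_zero ih.1 ih.2, mul_ne_zero ih.2 ih.2⟩
    intro n
    cases n with
    | zero =>
        rw [hfg]
        exact (order_shape_iff hshape0).mpr ha
    | succ n => exact (ois n).mpr (hUV n).1
end
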